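/- Main theorem (Median of Level-Set Aggregation): Assume the prediction space is ℝ and the loss ℓ : ℝ × 𝒴 → [0,∞) is either monotone in distance (ℓ(y'', y) ≥ ℓ(y', y) whenever |y''−y| ≥ |y'−y|, with 𝒴 ⊆ ℝ) or monotone in its first argument. Suppose the aggregation rule Agg is μ-stable, and suppose that for a finite nonempty tolerance set 𝒯 ⊂ [0,∞), some Δ > 0, C_g ≥ 1 and ρ ∈ (1/2, 1], at least ρ·|𝒯| of the tolerances t ∈ 𝒯 satisfy the local level-set growth condition with parameters (μ, t, Δ, C_g). For each i let ŷ_{t,i} := Agg(ℋ_{t,i}, x_i) and let ŷ_i be any median of {ŷ_{t,i}}_{t∈𝒯}. Then with t_max := max_{t∈𝒯} t, (1/n) Σ_{i=1}^n ℓ(ŷ_i, y_i) ≤ (2 C_g / ((2ρ−1) n)) · (min_{h∈ℋ} L_S(h) + t_max + Δ). -/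

import Mathlib

open MeasureTheory


private lemma median_lt_card' {T : Finset ℝ} (a : ℝ → ℝ) (c : ℝ)
    (hmed : ∀ d : ℝ, ∑ t ∈ T, |a t - c| ≤ ∑ t ∈ T, |a t - d|) :
    2 * ((T.filter (fun t => a t < c)).card : ℝ) ≤ (T.card : ℝ) := by
  classical
  set L := T.filter (fun t => a t < c) with hL
  by_cases hne : L.Nonempty
  · have hne' : (L.image a).Nonempty := hne.image a
    set M := (L.image a).max' hne' with hM
    set ε := c - M with hε
    have hMlt : M < c := by
      obtain ⟨t, htL, hta⟩ := Finset.mem_image.mp ((L.image a).max'_mem hne')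
      have : a t < c := (Finset.mem_filter.mp htL).2
      rw [hM, ← hta]; exact this
    have hεpos : 0 < ε := by simp [hε]; linarith
    have keyL : ∀ t ∈ L, |a t - (c - ε)| = |a t - c| - ε := by
      intro t ht
      have h1 : a t < c := (Finset.mem_filter.mp ht).2
      have h2 : a t ≤ M := Finset.le_max' _ _ (Finset.mem_image_of_mem a ht)
      have h3 : c - ε = M := by simp [hε]
      rw [h3, abs_of_nonpos (by linarith), abs_of_nonpos (by linarith), hε]
      ring
    have keyR : ∀ t ∈ T.filter (fun t => ¬ a t < c), |a t - (c - ε)| = |a t - c| + ε := by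
      intro t ht
      have h1 : c ≤ a t := le_of_not_gt (Finset.mem_filter.mp ht).2
      rw [abs_of_nonneg (by linarith), abs_of_nonneg (by linarith)]
      ring
    have hsplit : ∀ d : ℝ, ∑ t ∈ T, |a t - d|
        = ∑ t ∈ L, |a t - d| + ∑ t ∈ T.filter (fun t => ¬ a t < c), |a t - d| := by
      intro d
      rw [hL, Finset.sum_filter_add_sum_filter_not]
    have hmed' := hmed (c - ε)
    rw [hsplit c, hsplit (c - ε), Finset.sum_congr rfl keyL, Finset.sum_congr rfl keyR,
      Finset.sum_sub_distrib, Finset.sum_add_distrib] at hmed'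
    simp only [Finset.sum_const, nsmul_eq_mul] at hmed'
    have hcard : (L.card : ℝ) + ((T.filter (fun t => ¬ a t < c)).card : ℝ) = T.card := by
      rw [hL]
      exact_mod_cast Finset.card_filter_add_card_filter_not (p := fun t => a t < c)
    nlinarith [hmed', hεpos, hcard]
  · rw [Finset.not_nonempty_iff_eq_empty] at hne
    rw [hne]
    simp

private lemma median_gt_card' {T : Finset ℝ} (a : ℝ → ℝ) (c : ℝ)
    (hmed : ∀ d : ℝ, ∑ t ∈ T, |a t - c| ≤ ∑ t ∈ T, |a t - d|) :
    2 * ((T.filter (fun t => c < a t)).card : ℝ) ≤ (T.card : ℝ) := by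
  classical
  have h := median_lt_card' (fun t => -a t) (-c) (fun d => by
    have e1 : ∀ e : ℝ, ∀ t ∈ T, |(-a t) - e| = |a t - (-e)| := by
      intro e t _
      rw [← abs_neg]; ring_nf
    rw [Finset.sum_congr rfl (e1 (-c)), Finset.sum_congr rfl (e1 d)]
    simpa using hmed (-d))
  have : (T.filter (fun t => -a t < -c)) = (T.filter (fun t => c < a t)) := by
    apply Finset.filter_congr
    intro t _
    simp
  rwa [this] at h

private lemma card_filter_good' {G T : Finset ℝ} (hG : G ⊆ T) {ρ : ℝ}
    (hGcard : ρ * T.card ≤ G.card)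
    (P : ℝ → Prop) [DecidablePred P]
    (hP : 2 * ((T.filter fun t => ¬ P t).card : ℝ) ≤ (T.card : ℝ)) :
    (ρ - 1/2) * T.card ≤ ((G.filter P).card : ℝ) := by
  have h1 : (G.filter P).card + (G.filter fun t => ¬ P t).card = G.card :=
    Finset.card_filter_add_card_filter_not (p := P)
  have h2 : (G.filter fun t => ¬ P t).card ≤ (T.filter fun t => ¬ P t).card :=
    Finset.card_le_card (Finset.filter_subset_filter _ hG)
  have h1' : ((G.filter P).card : ℝ) + ((G.filter fun t => ¬ P t).card : ℝ) = G.card := by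
    exact_mod_cast h1
  have h2' : ((G.filter fun t => ¬ P t).card : ℝ) ≤ ((T.filter fun t => ¬ P t).card : ℝ) := by
    exact_mod_cast h2
  linarith

/-- **Main theorem: Median of Level-Set Aggregation.**
Prediction space is `ℝ`; the loss is either monotone in distance (`𝒴 ⊆ ℝ`, encoded by a map
`ι : 𝒴 → ℝ`) or monotone in its first argument.  The aggregation rule is `μ`-stable, and at
least a `ρ`-fraction (`ρ > 1/2`) of the tolerances in the finite grid `T ⊆ [0,∞)` satisfy
the local level-set growth condition with parameters `(μ, t, Δ, Cg)`.  For each `i`,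
`yhat i` is a median of `{Agg(ℋ_{t,i}, x_i)}_{t ∈ T}`.  Then
`(1/n) ∑ i ℓ(yhat i, y i) ≤ (2 Cg / ((2ρ−1) n))·(min_h LS(h) + t_max + Δ)`. -/
theorem mlsa_main
    {𝒳 𝒴 H : Type*} [MeasurableSpace H] (μ : Measure H)
    {n : ℕ} (hn : 0 < n) (x : Fin n → 𝒳) (y : Fin n → 𝒴)
    (eval : H → 𝒳 → ℝ) (ℓ : ℝ → 𝒴 → ℝ)
    (hℓpos : ∀ (a : ℝ) (yy : 𝒴), 0 ≤ ℓ a yy)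
    -- monotone in distance (with responses embedded in ℝ), or monotone in first argument
    (hmono : (∃ ι : 𝒴 → ℝ, ∀ (a b : ℝ) (yy : 𝒴), |b - ι yy| ≤ |a - ι yy| → ℓ b yy ≤ ℓ a yy)
      ∨ (∀ yy : 𝒴, Monotone fun a : ℝ => ℓ a yy)
      ∨ (∀ yy : 𝒴, Antitone fun a : ℝ => ℓ a yy))
    (hmeas : ∀ i : Fin n, Measurable fun h : H => ℓ (eval h (x i)) (y i))
    (LS : H → ℝ) (hLS : ∀ h, LS h = ∑ i, ℓ (eval h (x i)) (y i))
    (LSm : Fin n → H → ℝ)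
    (hLSm : ∀ i h, LSm i h = ∑ j ∈ Finset.univ.erase i, ℓ (eval h (x j)) (y j))
    (g : H) (hg : ∀ h, LS g ≤ LS h)
    (gm : Fin n → H) (hgm : ∀ i h, LSm i (gm i) ≤ LSm i h)
    (Ht : ℝ → Set H) (hHt : ∀ s, Ht s = {h : H | LS h ≤ LS g + s})
    (Hti : ℝ → Fin n → Set H)
    (hHti : ∀ s i, Hti s i = {h : H | LSm i h ≤ LSm i (gm i) + s})
    (hHtMeas : ∀ s, MeasurableSet (Ht s))
    (hHtiMeas : ∀ s i, MeasurableSet (Hti s i))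
    (Agg : Set H → 𝒳 → ℝ)
    -- μ-stability of the aggregation rule
    (hAgg : ∀ (G : Set H) (xx : 𝒳) (yy : 𝒴), MeasurableSet G → 0 < μ G → μ G < ⊤ →
      ℓ (Agg G xx) yy ≤ (μ G).toReal⁻¹ * ∫ h in G, ℓ (eval h xx) yy ∂μ)
    (T : Finset ℝ) (hTne : T.Nonempty) (hTnonneg : ∀ t ∈ T, 0 ≤ t)
    (Δ Cg ρ : ℝ) (hΔ : 0 < Δ) (hCg : 1 ≤ Cg) (hρ : 1 / 2 < ρ) (hρ1 : ρ ≤ 1)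
    -- the local level-set growth condition with parameters (μ, t, Δ, Cg)
    (Good : ℝ → Prop)
    (hGood : ∀ t, Good t ↔ (0 < μ (Ht (t - Δ)) ∧ μ (Ht (t + Δ)) < ⊤ ∧
      (μ (Ht (t + Δ))).toReal ≤ Cg * (μ (Ht (t - Δ))).toReal ∧
      ∀ i : Fin n, Ht (t - Δ) ⊆ Hti t i ∧ Hti t i ⊆ Ht (t + Δ)))
    [DecidablePred Good]
    -- at least a ρ-fraction of tolerances in T are good
    (hGrid : ρ * T.card ≤ (T.filter Good).card)
    (yhatt : ℝ → Fin n → ℝ) (hyhatt : ∀ t i, yhatt t i = Agg (Hti t i) (x i))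
    -- yhat i is a median of {yhatt t i}_{t ∈ T}
    (yhat : Fin n → ℝ)
    (hmed : ∀ i : Fin n, ∀ c : ℝ, ∑ t ∈ T, |yhatt t i - yhat i| ≤ ∑ t ∈ T, |yhatt t i - c|) :
    (1 / (n : ℝ)) * ∑ i, ℓ (yhat i) (y i)
      ≤ (2 * Cg / ((2 * ρ - 1) * n)) * (LS g + T.max' hTne + Δ) := by
  classical
  set m : ℝ := (T.card : ℝ) with hm
  set tmax : ℝ := T.max' hTne with htmax
  set K : ℝ := LS g + tmax + Δ with hK
  set G : Finset ℝ := T.filter Good with hGdef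
  have hGsub : G ⊆ T := Finset.filter_subset _ _
  have hm0 : 0 < m := by
    rw [hm]
    exact_mod_cast hTne.card_pos
  have hLSnonneg : ∀ h, 0 ≤ LS h := by
    intro h
    rw [hLS]
    exact Finset.sum_nonneg fun i _ => hℓpos _ _
  have htmax0 : 0 ≤ tmax := hTnonneg _ (T.max'_mem hTne)
  have hK0 : 0 ≤ K := by
    have := hLSnonneg g
    rw [hK]; linarith
  have hCg0 : (0:ℝ) ≤ Cg := by linarith
  have hn0 : (0:ℝ) < n := by exact_mod_cast hn
  -- Step A: per good tolerance bound
  have stepA : ∀ t ∈ G, ∑ i, ℓ (yhatt t i) (y i) ≤ Cg * K := by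
    intro t ht
    obtain ⟨htT, htG⟩ := Finset.mem_filter.mp ht
    rw [hGood] at htG
    obtain ⟨hpos, hfin, hratio, hsub⟩ := htG
    have htle : t ≤ tmax := T.le_max' t htT
    have hAB : Ht (t - Δ) ⊆ Ht (t + Δ) := by
      rw [hHt, hHt]
      intro h hh
      simp only [Set.mem_setOf_eq] at hh ⊢
      linarith
    have hμAfin : μ (Ht (t - Δ)) < ⊤ := (measure_mono hAB).trans_lt hfin
    have hμApos : 0 < (μ (Ht (t - Δ))).toReal := ENNReal.toReal_pos hpos.ne' hμAfin.ne
    -- integrability of each loss on Ht (t+Δ)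
    have hbound : ∀ i : Fin n, ∀ h ∈ Ht (t + Δ), ℓ (eval h (x i)) (y i) ≤ LS g + (t + Δ) := by
      intro i h hh
      rw [hHt] at hh
      simp only [Set.mem_setOf_eq] at hh
      have h1 : ℓ (eval h (x i)) (y i) ≤ LS h := by
        rw [hLS]
        exact Finset.single_le_sum (f := fun j => ℓ (eval h (x j)) (y j))
          (fun j _ => hℓpos _ _) (Finset.mem_univ i)
      linarith
    have hint : ∀ i : Fin n, IntegrableOn (fun h => ℓ (eval h (x i)) (y i)) (Ht (t + Δ)) μ := by
      intro i
      have hc : IntegrableOn (fun _ : H => LS g + (t + Δ)) (Ht (t + Δ)) μ :=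
        integrableOn_const hfin.ne
      refine hc.mono' ((hmeas i).aestronglyMeasurable) ?_
      refine (ae_restrict_iff' (hHtMeas _)).mpr (ae_of_all _ fun h hh => ?_)
      rw [Real.norm_eq_abs, abs_of_nonneg (hℓpos _ _)]
      exact hbound i h hh
    -- per i stability bound
    have stepi : ∀ i : Fin n, ℓ (yhatt t i) (y i)
        ≤ (μ (Ht (t - Δ))).toReal⁻¹ * ∫ h in Ht (t + Δ), ℓ (eval h (x i)) (y i) ∂μ := by
      intro i
      have hμipos : 0 < μ (Hti t i) := hpos.trans_le (measure_mono (hsub i).1)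
      have hμifin : μ (Hti t i) < ⊤ := (measure_mono (hsub i).2).trans_lt hfin
      have hA := hAgg (Hti t i) (x i) (y i) (hHtiMeas t i) hμipos hμifin
      rw [← hyhatt] at hA
      refine hA.trans ?_
      have hImono : ∫ h in Hti t i, ℓ (eval h (x i)) (y i) ∂μ
          ≤ ∫ h in Ht (t + Δ), ℓ (eval h (x i)) (y i) ∂μ := by
        refine setIntegral_mono_set (hint i) ?_ ?_
        · exact ae_of_all _ fun h => hℓpos _ _
        · exact HasSubset.Subset.eventuallyLE (hsub i).2
      have hInonneg : 0 ≤ ∫ h in Hti t i, ℓ (eval h (x i)) (y i) ∂μ :=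
        setIntegral_nonneg (hHtiMeas t i) fun h _ => hℓpos _ _
      have hinv : (μ (Hti t i)).toReal⁻¹ ≤ (μ (Ht (t - Δ))).toReal⁻¹ := by
        have h1 : (μ (Ht (t - Δ))).toReal ≤ (μ (Hti t i)).toReal :=
          ENNReal.toReal_mono hμifin.ne (measure_mono (hsub i).1)
        exact inv_anti₀ hμApos h1
      calc (μ (Hti t i)).toReal⁻¹ * ∫ h in Hti t i, ℓ (eval h (x i)) (y i) ∂μ
          ≤ (μ (Ht (t - Δ))).toReal⁻¹ * ∫ h in Hti t i, ℓ (eval h (x i)) (y i) ∂μ :=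
            mul_le_mul_of_nonneg_right hinv hInonneg
        _ ≤ (μ (Ht (t - Δ))).toReal⁻¹ * ∫ h in Ht (t + Δ), ℓ (eval h (x i)) (y i) ∂μ :=
            mul_le_mul_of_nonneg_left hImono (by positivity)
    -- sum over i
    have hsum : ∑ i, ℓ (yhatt t i) (y i)
        ≤ (μ (Ht (t - Δ))).toReal⁻¹ * ∫ h in Ht (t + Δ), LS h ∂μ := by
      have h1 : ∑ i : Fin n, ∫ h in Ht (t + Δ), ℓ (eval h (x i)) (y i) ∂μ
          = ∫ h in Ht (t + Δ), LS h ∂μ := by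
        rw [← integral_finset_sum _ fun i _ => hint i]
        refine setIntegral_congr_fun (hHtMeas _) fun h _ => ?_
        rw [hLS]
      calc ∑ i, ℓ (yhatt t i) (y i)
          ≤ ∑ i : Fin n, (μ (Ht (t - Δ))).toReal⁻¹ * ∫ h in Ht (t + Δ), ℓ (eval h (x i)) (y i) ∂μ :=
            Finset.sum_le_sum fun i _ => stepi i
        _ = (μ (Ht (t - Δ))).toReal⁻¹ * ∑ i : Fin n, ∫ h in Ht (t + Δ), ℓ (eval h (x i)) (y i) ∂μ := by
            rw [Finset.mul_sum]
        _ = (μ (Ht (t - Δ))).toReal⁻¹ * ∫ h in Ht (t + Δ), LS h ∂μ := by rw [h1]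
    have hLSint : IntegrableOn LS (Ht (t + Δ)) μ := by
      have : IntegrableOn (fun h => ∑ i : Fin n, ℓ (eval h (x i)) (y i)) (Ht (t + Δ)) μ :=
        integrable_finset_sum _ fun i _ => hint i
      exact this.congr_fun (fun h _ => (hLS h).symm) (hHtMeas _)
    have hILS : ∫ h in Ht (t + Δ), LS h ∂μ ≤ (μ (Ht (t + Δ))).toReal * (LS g + (t + Δ)) := by
      have h2 : ∫ h in Ht (t + Δ), LS h ∂μ ≤ ∫ _ in Ht (t + Δ), (LS g + (t + Δ)) ∂μ := by
        refine setIntegral_mono_on hLSint (integrableOn_const hfin.ne) (hHtMeas _) ?_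
        intro h hh
        rw [hHt] at hh
        simp only [Set.mem_setOf_eq] at hh
        linarith
      rwa [setIntegral_const, smul_eq_mul] at h2
    have hKt : 0 ≤ LS g + (t + Δ) := by
      have := hLSnonneg g
      have := hTnonneg t htT
      linarith
    calc ∑ i, ℓ (yhatt t i) (y i)
        ≤ (μ (Ht (t - Δ))).toReal⁻¹ * ∫ h in Ht (t + Δ), LS h ∂μ := hsum
      _ ≤ (μ (Ht (t - Δ))).toReal⁻¹ * ((μ (Ht (t + Δ))).toReal * (LS g + (t + Δ))) :=
          mul_le_mul_of_nonneg_left hILS (by positivity)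
      _ ≤ (μ (Ht (t - Δ))).toReal⁻¹ * ((Cg * (μ (Ht (t - Δ))).toReal) * (LS g + (t + Δ))) :=
          mul_le_mul_of_nonneg_left (mul_le_mul_of_nonneg_right hratio hKt) (by positivity)
      _ = Cg * (LS g + (t + Δ)) := by
          field_simp
      _ ≤ Cg * K := by
          rw [hK]
          apply mul_le_mul_of_nonneg_left _ hCg0
          linarith
  -- Step B: median bound per sample
  have stepB : ∀ i : Fin n, ℓ (yhat i) (y i) * ((ρ - 1/2) * m)
      ≤ ∑ t ∈ G, ℓ (yhatt t i) (y i) := by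
    intro i
    have hlt := median_lt_card' (fun t => yhatt t i) (yhat i) (hmed i)
    have hgt := median_gt_card' (fun t => yhatt t i) (yhat i) (hmed i)
    obtain ⟨U, hUsub, hUcard, hUle⟩ : ∃ U : Finset ℝ, U ⊆ G ∧ (ρ - 1/2) * m ≤ (U.card : ℝ)
        ∧ ∀ t ∈ U, ℓ (yhat i) (y i) ≤ ℓ (yhatt t i) (y i) := by
      have hcardR : ∀ (P : ℝ → Prop) [DecidablePred P],
          (2 * ((T.filter fun t => ¬ P t).card : ℝ) ≤ (T.card : ℝ)) →
          (ρ - 1/2) * m ≤ (((G.filter P)).card : ℝ) := by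
        intro P _ hP
        exact card_filter_good' hGsub hGrid P hP
      rcases hmono with ⟨ι, hι⟩ | hmon | hant
      · by_cases hside : ι (y i) ≤ yhat i
        · refine ⟨G.filter (fun t => yhat i ≤ yhatt t i), Finset.filter_subset _ _, ?_, ?_⟩
          · refine hcardR _ ?_
            refine le_trans (le_of_eq ?_) hlt
            congr 1
            norm_cast
            congr 1
            apply Finset.filter_congr
            intro t _
            simp
          · intro t ht
            have h2 := (Finset.mem_filter.mp ht).2
            refine hι (yhatt t i) (yhat i) (y i) ?_
            rw [abs_of_nonneg (by linarith), abs_of_nonneg (by linarith)]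
            linarith
        · push_neg at hside
          refine ⟨G.filter (fun t => yhatt t i ≤ yhat i), Finset.filter_subset _ _, ?_, ?_⟩
          · refine hcardR _ ?_
            refine le_trans (le_of_eq ?_) hgt
            congr 1
            norm_cast
            congr 1
            apply Finset.filter_congr
            intro t _
            simp
          · intro t ht
            have h2 := (Finset.mem_filter.mp ht).2
            refine hι (yhatt t i) (yhat i) (y i) ?_
            rw [abs_of_nonpos (by linarith), abs_of_nonpos (by linarith)]
            linarith
      · refine ⟨G.filter (fun t => yhat i ≤ yhatt t i), Finset.filter_subset _ _, ?_, ?_⟩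
        · refine hcardR _ ?_
          refine le_trans (le_of_eq ?_) hlt
          congr 1
          norm_cast
          congr 1
          apply Finset.filter_congr
          intro t _
          simp
        · intro t ht
          exact hmon (y i) (Finset.mem_filter.mp ht).2
      · refine ⟨G.filter (fun t => yhatt t i ≤ yhat i), Finset.filter_subset _ _, ?_, ?_⟩
        · refine hcardR _ ?_
          refine le_trans (le_of_eq ?_) hgt
          congr 1
          norm_cast
          congr 1
          apply Finset.filter_congr
          intro t _
          simp
        · intro t ht
          exact hant (y i) (Finset.mem_filter.mp ht).2
    calc ℓ (yhat i) (y i) * ((ρ - 1/2) * m)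
        ≤ ℓ (yhat i) (y i) * (U.card : ℝ) :=
          mul_le_mul_of_nonneg_left hUcard (hℓpos _ _)
      _ = ∑ _t ∈ U, ℓ (yhat i) (y i) := by rw [Finset.sum_const, nsmul_eq_mul, mul_comm]
      _ ≤ ∑ t ∈ U, ℓ (yhatt t i) (y i) := Finset.sum_le_sum hUle
      _ ≤ ∑ t ∈ G, ℓ (yhatt t i) (y i) :=
          Finset.sum_le_sum_of_subset_of_nonneg hUsub fun t _ _ => hℓpos _ _
  -- Combine
  have main : (∑ i, ℓ (yhat i) (y i)) * ((ρ - 1/2) * m) ≤ m * (Cg * K) := by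
    calc (∑ i, ℓ (yhat i) (y i)) * ((ρ - 1/2) * m)
        = ∑ i, ℓ (yhat i) (y i) * ((ρ - 1/2) * m) := by rw [Finset.sum_mul]
      _ ≤ ∑ i, ∑ t ∈ G, ℓ (yhatt t i) (y i) := Finset.sum_le_sum fun i _ => stepB i
      _ = ∑ t ∈ G, ∑ i, ℓ (yhatt t i) (y i) := Finset.sum_comm
      _ ≤ ∑ _t ∈ G, Cg * K := Finset.sum_le_sum stepA
      _ = (G.card : ℝ) * (Cg * K) := by rw [Finset.sum_const, nsmul_eq_mul]
      _ ≤ m * (Cg * K) := by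
          refine mul_le_mul_of_nonneg_right ?_ (by positivity)
          rw [hm]
          exact_mod_cast Finset.card_le_card hGsub
  have hS : ∑ i, ℓ (yhat i) (y i) ≤ 2 * Cg * K / (2 * ρ - 1) := by
    rw [le_div_iff₀ (by linarith : (0:ℝ) < 2 * ρ - 1)]
    have hc : (∑ i, ℓ (yhat i) (y i)) * (2 * ρ - 1) * m ≤ 2 * Cg * K * m := by
      calc (∑ i, ℓ (yhat i) (y i)) * (2 * ρ - 1) * m
          = 2 * ((∑ i, ℓ (yhat i) (y i)) * ((ρ - 1/2) * m)) := by ring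
        _ ≤ 2 * (m * (Cg * K)) := by linarith
        _ = 2 * Cg * K * m := by ring
    exact le_of_mul_le_mul_right hc hm0
  calc (1 / (n : ℝ)) * ∑ i, ℓ (yhat i) (y i)
      ≤ (1 / (n : ℝ)) * (2 * Cg * K / (2 * ρ - 1)) :=
        mul_le_mul_of_nonneg_left hS (by positivity)
    _ = (2 * Cg / ((2 * ρ - 1) * n)) * (LS g + T.max' hTne + Δ) := by
        rw [hK, htmax]
        field_simp
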